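/- Let 0 < s ≤ 1/√2 and let g be analytic and locally univalent on the unit disk with g(0)=0, g'(0)=1, and 1 + z g''(z)/g'(z) subordinate to (1+sz)^2. Then the pre-Schwarzian norm satisfies ‖P_g‖ ≤ 2(√(3s^2+4)+4)(3s^2 + 2√(3s^2+4) - 4)/(27s), and this bound is sharp. -/

import Mathlib

open Real Set Metric
open MeasureTheory intervalIntegral

/-- The class `C_L`: analytic locally univalent `g` on the unit disk, normalized,
with `1 + z g''/g'` subordinate to `(1+sz)²`. -/
def CLclass (s : ℝ) (g : ℂ → ℂ) : Prop :=
  DifferentiableOn ℂ g (ball 0 1) ∧ g 0 = 0 ∧ deriv g 0 = 1 ∧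
  (∀ z ∈ ball (0:ℂ) 1, deriv g z ≠ 0) ∧
  ∃ ω : ℂ → ℂ, DifferentiableOn ℂ ω (ball 0 1) ∧ ω 0 = 0 ∧
    (∀ z ∈ ball (0:ℂ) 1, ‖ω z‖ < 1) ∧
    ∀ z ∈ ball (0:ℂ) 1,
      1 + z * deriv (deriv g) z / deriv g z = (1 + (s:ℂ) * ω z)^2

/-- The set of values `(1-|z|²)|g''(z)/g'(z)|`, whose supremum is the pre-Schwarzian norm. -/
def preSchwarzianSet (g : ℂ → ℂ) : Set ℝ :=
  {x | ∃ z ∈ ball (0:ℂ) 1, x = (1 - ‖z‖^2) * ‖deriv (deriv g) z / deriv g z‖}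

lemma entire_primitive (f : ℂ → ℂ) (hf : Differentiable ℂ f) :
    ∃ g : ℂ → ℂ, g 0 = 0 ∧ ∀ z, HasDerivAt g (f z) z := by
  have hdf : Differentiable ℂ (deriv f) :=
    fun x => ((hf.differentiableOn.analyticOnNhd isOpen_univ).deriv x trivial).differentiableAt
  have hcf : Continuous f := hf.continuous
  have hcdf : Continuous (deriv f) := hdf.continuous
  refine ⟨fun z => ∫ t in (0:ℝ)..1, z * f (t * z), by simp, fun z₀ => ?_⟩
  set F : ℂ → ℝ → ℂ := fun x t => x * f (t * x) with hF
  set F' : ℂ → ℝ → ℂ := fun x t => f (t * x) + x * (deriv f (t * x) * t) with hF'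
  have hcont : ∀ x : ℂ, Continuous (fun t : ℝ => F x t) := by
    intro x; exact continuous_const.mul (hcf.comp (by continuity))
  have hcont' : ∀ x : ℂ, Continuous (fun t : ℝ => F' x t) := by
    intro x
    exact (hcf.comp (by continuity)).add
      (continuous_const.mul ((hcdf.comp (by continuity)).mul Complex.continuous_ofReal))
  obtain ⟨C, hC⟩ := (isCompact_closedBall (0:ℂ) (‖z₀‖ + 1)).exists_bound_of_continuousOn
    hcf.continuousOn
  obtain ⟨C', hC'⟩ := (isCompact_closedBall (0:ℂ) (‖z₀‖ + 1)).exists_bound_of_continuousOn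
    hcdf.continuousOn
  have key := hasDerivAt_integral_of_dominated_loc_of_deriv_le (F := F) (F' := F')
    (x₀ := z₀) (a := 0) (b := 1) (μ := volume)
    (bound := fun _ => |C| + (‖z₀‖ + 1) * |C'|) (s := ball z₀ 1) (ball_mem_nhds z₀ one_pos)
    (Filter.Eventually.of_forall fun x => (hcont x).aestronglyMeasurable)
    ((hcont z₀).intervalIntegrable 0 1)
    ((hcont' z₀).aestronglyMeasurable)
    ?_ (intervalIntegrable_const) ?_
  · have h2 : (∫ t in (0:ℝ)..1, F' z₀ t) = f z₀ := by
      have hftc : ∀ t ∈ uIcc (0:ℝ) 1,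
          HasDerivAt (fun t : ℝ => (t:ℂ) * f (t * z₀)) (F' z₀ t) t := by
        intro t _
        have h1 : HasDerivAt (fun t : ℝ => (t:ℂ)) 1 t := by
          exact Complex.ofRealCLM.hasDerivAt (x := t)
        have h2 : HasDerivAt (fun w : ℂ => f (w * z₀)) (deriv f ((t:ℂ) * z₀) * z₀) (t:ℂ) := by
          exact (HasDerivAt.comp (t:ℂ) (hf _).hasDerivAt (hasDerivAt_mul_const z₀))
        have h3 := h2.comp_ofReal
        have := h1.mul h3
        convert this using 1
        · rfl
        · rfl
        show f (↑t * z₀) + z₀ * (deriv f (↑t * z₀) * ↑t) = _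
        ring
      rw [intervalIntegral.integral_eq_sub_of_hasDerivAt hftc
        ((hcont' z₀).intervalIntegrable 0 1)]
      simp
    rw [h2] at key
    exact key.2
  · refine Filter.Eventually.of_forall fun t ht x hx => ?_
    have ht' : t ∈ Set.Ioc (0:ℝ) 1 := by simpa [Set.uIoc_of_le (by norm_num : (0:ℝ) ≤ 1)] using ht
    have htx : ((t:ℂ) * x) ∈ closedBall (0:ℂ) (‖z₀‖ + 1) := by
      rw [mem_closedBall_zero_iff]
      have hx' : ‖x‖ ≤ ‖z₀‖ + 1 := by
        have := mem_ball_iff_norm.mp hx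
        have := norm_sub_norm_le x z₀
        linarith
      calc ‖(t:ℂ) * x‖ = |t| * ‖x‖ := by simp
        _ ≤ 1 * (‖z₀‖ + 1) := by
            apply mul_le_mul (by rw [abs_of_pos ht'.1]; exact ht'.2) hx' (norm_nonneg _) one_pos.le
        _ = ‖z₀‖ + 1 := one_mul _
    have hx' : ‖x‖ ≤ ‖z₀‖ + 1 := by
      have := mem_ball_iff_norm.mp hx
      have := norm_sub_norm_le x z₀
      linarith
    calc ‖F' x t‖ ≤ ‖f ((t:ℂ) * x)‖ + ‖x * (deriv f ((t:ℂ) * x) * t)‖ := norm_add_le _ _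
      _ ≤ |C| + (‖z₀‖ + 1) * |C'| := by
          gcongr
          · exact (hC _ htx).trans (le_abs_self C)
          · rw [norm_mul, norm_mul]
            have h1 : ‖deriv f ((t:ℂ) * x)‖ ≤ |C'| := (hC' _ htx).trans (le_abs_self C')
            have h2 : ‖(t:ℂ)‖ ≤ 1 := by
              simp only [Complex.norm_real, Real.norm_eq_abs, abs_of_pos ht'.1]
              exact ht'.2
            calc ‖x‖ * (‖deriv f ((t:ℂ)*x)‖ * ‖(t:ℂ)‖) ≤ (‖z₀‖+1) * (|C'| * 1) := by
                  apply mul_le_mul hx' (mul_le_mul h1 h2 (norm_nonneg _) (abs_nonneg _))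
                    (by positivity) (by positivity)
              _ = (‖z₀‖ + 1) * |C'| := by ring
  · refine Filter.Eventually.of_forall fun t ht x hx => ?_
    have h1 : HasDerivAt (fun x : ℂ => f ((t:ℂ) * x)) (deriv f ((t:ℂ) * x) * t) x := by
      exact (HasDerivAt.comp x (hf ((t:ℂ) * x)).hasDerivAt ((hasDerivAt_id x).const_mul (t:ℂ))).congr_deriv (by simp)
    have := (hasDerivAt_id x).mul h1
    convert this using 1
    · rfl
    · rfl
    show f (↑t * x) + x * (deriv f (↑t * x) * ↑t) = _
    simp only [id_eq, one_mul]

/-- the key polynomial identity -/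
lemma key_ident (s r t : ℝ) (ht2 : t^2 = 3*s^2 + 4) :
    2*(t+4)*(3*s^2+2*t-4) - 27*s^2*((1-r^2)*(2+s*r))
      = (3*s*r - t + 2)^2 * (3*s*r + 2*t + 2) := by
  linear_combination (-2*t + 9*s*r + 10) * ht2

lemma key_ineq (s r : ℝ) (hs0 : 0 < s) (hr0 : 0 ≤ r) :
    (1 - r^2) * (s*(2+s*r))
      ≤ 2*(Real.sqrt (3*s^2 + 4) + 4)*(3*s^2 + 2*Real.sqrt (3*s^2 + 4) - 4)/(27*s) := by
  set t := Real.sqrt (3*s^2 + 4) with htdef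
  have ht2 : t^2 = 3*s^2 + 4 := Real.sq_sqrt (by positivity)
  have ht0 : 0 ≤ t := Real.sqrt_nonneg _
  have hident := key_ident s r t ht2
  have hsr : 0 ≤ 3*s*r := by positivity
  have hpos : 0 ≤ (3*s*r - t + 2)^2 * (3*s*r + 2*t + 2) := by
    apply mul_nonneg (sq_nonneg _); linarith
  rw [le_div_iff₀ (by positivity : (0:ℝ) < 27*s)]
  nlinarith [hident, hpos]

theorem stmt17 (s : ℝ) (hs0 : 0 < s) (hs1 : s ≤ 1 / Real.sqrt 2) :
    (∀ g : ℂ → ℂ, CLclass s g → ∀ x ∈ preSchwarzianSet g,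
      x ≤ 2*(Real.sqrt (3*s^2 + 4) + 4)*(3*s^2 + 2*Real.sqrt (3*s^2 + 4) - 4)/(27*s)) ∧
    (∃ g : ℂ → ℂ, CLclass s g ∧
      sSup (preSchwarzianSet g)
        = 2*(Real.sqrt (3*s^2 + 4) + 4)*(3*s^2 + 2*Real.sqrt (3*s^2 + 4) - 4)/(27*s)) := by
  set M := 2*(Real.sqrt (3*s^2 + 4) + 4)*(3*s^2 + 2*Real.sqrt (3*s^2 + 4) - 4)/(27*s) with hMdef
  -- Part 1
  have part1 : ∀ g : ℂ → ℂ, CLclass s g → ∀ x ∈ preSchwarzianSet g, x ≤ M := by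
    rintro g ⟨hg, hg0, hg'1, hg'ne, ω, hω, hω0, hω1, hsub⟩ x ⟨z, hz, hxz⟩
    -- Schwarz lemma for ω
    have hωmaps : MapsTo ω (ball (0:ℂ) 1) (ball (0:ℂ) 1) := by
      intro w hw; rw [mem_ball_zero_iff]; exact hω1 w hw
    have hschwarz : ∀ w ∈ ball (0:ℂ) 1, ‖ω w‖ ≤ ‖w‖ := by
      intro w hw
      have := Complex.norm_le_norm_of_mapsTo_ball hω (hωmaps.mono_right ball_subset_closedBall) hω0
        (by simpa [Complex.norm_def] using mem_ball_zero_iff.mp hw)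
      simpa using this
    -- basic bound on punctured disk
    have hb : ∀ w ∈ ball (0:ℂ) 1, w ≠ 0 →
        ‖deriv (deriv g) w / deriv g w‖ ≤ s*(2+s*‖w‖) := by
      intro w hw hw0
      set h := deriv (deriv g) w / deriv g w with hh
      have h1 : 1 + w * h = (1 + (s:ℂ) * ω w)^2 := by
        rw [hh, ← mul_div_assoc]; exact hsub w hw
      have h2 : w * h = (s:ℂ) * ω w * (2 + (s:ℂ) * ω w) := by linear_combination h1
      have hωw := hschwarz w hw
      have e2 : ‖2 + (s:ℂ) * ω w‖ ≤ 2 + s * ‖w‖ := by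
        calc ‖2 + (s:ℂ) * ω w‖ ≤ ‖(2:ℂ)‖ + ‖(s:ℂ) * ω w‖ := norm_add_le _ _
          _ = 2 + s * ‖ω w‖ := by
              simp [norm_mul, Complex.norm_real, abs_of_pos hs0]
          _ ≤ 2 + s * ‖w‖ := by nlinarith
      have e3 : ‖w‖ * ‖h‖ ≤ ‖w‖ * (s*(2+s*‖w‖)) := by
        have heq : ‖w‖ * ‖h‖ = s * ‖ω w‖ * ‖2 + (s:ℂ) * ω w‖ := by
          rw [← norm_mul, h2]
          simp [norm_mul, Complex.norm_real, abs_of_pos hs0]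
          try ring
        have hn1 : 0 ≤ ‖ω w‖ := norm_nonneg _
        have hn2 : 0 ≤ ‖2 + (s:ℂ) * ω w‖ := norm_nonneg _
        have hn3 : 0 ≤ ‖w‖ := norm_nonneg _
        calc ‖w‖ * ‖h‖ = s * ‖ω w‖ * ‖2 + (s:ℂ) * ω w‖ := heq
          _ ≤ s * ‖w‖ * ‖2 + (s:ℂ) * ω w‖ := by
              apply mul_le_mul_of_nonneg_right _ hn2
              exact mul_le_mul_of_nonneg_left hωw hs0.le
          _ ≤ s * ‖w‖ * (2 + s * ‖w‖) := by
              exact mul_le_mul_of_nonneg_left e2 (by positivity)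
          _ = ‖w‖ * (s*(2+s*‖w‖)) := by ring
      have hwpos : 0 < ‖w‖ := norm_pos_iff.mpr hw0
      exact le_of_mul_le_mul_left e3 hwpos
    -- continuity for the value at 0
    have hA : AnalyticOnNhd ℂ g (ball 0 1) := hg.analyticOnNhd isOpen_ball
    have h0mem : (0:ℂ) ∈ ball (0:ℂ) 1 := by simp
    have hc1 : ContinuousAt (deriv g) 0 := ((hA.deriv) 0 h0mem).continuousAt
    have hc2 : ContinuousAt (deriv (deriv g)) 0 := ((hA.deriv.deriv) 0 h0mem).continuousAt
    have hcH : ContinuousAt (fun w => deriv (deriv g) w / deriv g w) 0 :=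
      ContinuousAt.div hc2 hc1 (by rw [hg'1]; exact one_ne_zero)
    have h0bound : ‖deriv (deriv g) 0 / deriv g 0‖ ≤ s * 2 := by
      have htend : Filter.Tendsto (fun w => ‖deriv (deriv g) w / deriv g w‖) (nhdsWithin (0:ℂ) {(0:ℂ)}ᶜ)
          (nhds ‖deriv (deriv g) 0 / deriv g 0‖) :=
        (hcH.norm).tendsto.mono_left nhdsWithin_le_nhds
      have hbt : Filter.Tendsto (fun w : ℂ => s*(2+s*‖w‖)) (nhdsWithin (0:ℂ) {(0:ℂ)}ᶜ)
          (nhds (s*2)) := by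
        have : Filter.Tendsto (fun w : ℂ => s*(2+s*‖w‖)) (nhds 0) (nhds (s*(2+s*‖(0:ℂ)‖))) := by
          apply Filter.Tendsto.const_mul
          exact (continuous_const.add (continuous_const.mul continuous_norm)).tendsto 0
        simpa using this.mono_left nhdsWithin_le_nhds
      have hev : ∀ᶠ w in nhdsWithin (0:ℂ) {(0:ℂ)}ᶜ,
          ‖deriv (deriv g) w / deriv g w‖ ≤ s*(2+s*‖w‖) := by
        filter_upwards [eventually_nhdsWithin_of_eventually_nhds
          (isOpen_ball.eventually_mem h0mem), self_mem_nhdsWithin] with w hw1 hw2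
        exact hb w hw1 hw2
      exact le_of_tendsto_of_tendsto htend hbt hev
    -- combine
    have hzn1 : ‖z‖ < 1 := mem_ball_zero_iff.mp hz
    have hzn0 : 0 ≤ ‖z‖ := norm_nonneg _
    have hmain : ‖deriv (deriv g) z / deriv g z‖ ≤ s*(2+s*‖z‖) := by
      by_cases hz0 : z = 0
      · subst hz0; simpa using h0bound.trans (by nlinarith)
      · exact hb z hz hz0
    calc x = (1 - ‖z‖^2) * ‖deriv (deriv g) z / deriv g z‖ := hxz
      _ ≤ (1 - ‖z‖^2) * (s*(2+s*‖z‖)) := by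
          apply mul_le_mul_of_nonneg_left hmain; nlinarith
      _ ≤ M := key_ineq s ‖z‖ hs0 hzn0
  refine ⟨part1, ?_⟩
  -- Part 2: sharpness
  set f : ℂ → ℂ := fun z => Complex.exp (2*(s:ℂ)*z + (s:ℂ)^2*z^2/2) with hfdef
  have hfD : ∀ z : ℂ, HasDerivAt f ((2*(s:ℂ) + (s:ℂ)^2*z) * f z) z := by
    intro z
    have hp : HasDerivAt (fun z : ℂ => 2*(s:ℂ)*z + (s:ℂ)^2*z^2/2) (2*(s:ℂ) + (s:ℂ)^2*z) z := by
      have h1 : HasDerivAt (fun z : ℂ => 2*(s:ℂ)*z) (2*(s:ℂ)) z := by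
        simpa using (hasDerivAt_id z).const_mul (2*(s:ℂ))
      have h2 : HasDerivAt (fun z : ℂ => (s:ℂ)^2*z^2/2) ((s:ℂ)^2*z) z := by
        have := ((hasDerivAt_pow 2 z).const_mul ((s:ℂ)^2)).div_const 2
        simpa using this.congr_deriv (by ring)
      exact h1.add h2
    exact (hp.cexp).congr_deriv (by ring)
  have hfdiff : Differentiable ℂ f := fun z => (hfD z).differentiableAt
  obtain ⟨g, hg0, hgd⟩ := entire_primitive f hfdiff
  have hderivg : deriv g = f := funext fun z => (hgd z).deriv
  have hfne : ∀ z, f z ≠ 0 := fun z => Complex.exp_ne_zero _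
  have hratio : ∀ z : ℂ, deriv (deriv g) z / deriv g z = 2*(s:ℂ) + (s:ℂ)^2*z := by
    intro z
    rw [hderivg, (hfD z).deriv]
    exact mul_div_cancel_right₀ _ (hfne z)
  have hCL : CLclass s g := by
    refine ⟨fun z _ => (hgd z).differentiableAt.differentiableWithinAt, hg0, ?_, ?_, ?_⟩
    · rw [hderivg]; simp [hfdef]
    · intro z _; rw [hderivg]; exact hfne z
    · refine ⟨fun z => z, differentiableOn_id, rfl, fun z hz => mem_ball_zero_iff.mp hz, ?_⟩
      intro z hz
      rw [mul_div_assoc, hratio]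
      ring
  refine ⟨g, hCL, ?_⟩
  -- compute the sup
  set t := Real.sqrt (3*s^2 + 4) with htdef
  have ht2 : t^2 = 3*s^2 + 4 := Real.sq_sqrt (by positivity)
  have ht0 : 0 ≤ t := Real.sqrt_nonneg _
  have ht2le : 2 ≤ t := by nlinarith
  set r0 : ℝ := (t - 2)/(3*s) with hr0def
  have hr00 : 0 ≤ r0 := div_nonneg (by linarith) (by positivity)
  have hr01 : r0 < 1 := by
    rw [hr0def, div_lt_one (by positivity : (0:ℝ) < 3*s)]
    nlinarith
  have h3sr0 : 3*s*r0 = t - 2 := by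
    rw [hr0def]; field_simp
  have hval : (1 - r0^2) * (s*(2+s*r0)) = M := by
    have hident := key_ident s r0 t ht2
    rw [h3sr0] at hident
    have h27 : 27*s*((1 - r0^2) * (s*(2+s*r0))) = 2*(t+4)*(3*s^2+2*t-4) := by
      linear_combination -hident
    rw [hMdef, eq_div_iff (by positivity : (27*s : ℝ) ≠ 0)]
    linear_combination h27
  have hmem : M ∈ preSchwarzianSet g := by
    refine ⟨(r0:ℂ), ?_, ?_⟩
    · rw [mem_ball_zero_iff, Complex.norm_real, Real.norm_eq_abs, abs_of_nonneg hr00]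
      exact hr01
    · rw [hratio]
      have hc : 2*(s:ℂ) + (s:ℂ)^2*(r0:ℂ) = ((s*(2+s*r0) : ℝ) : ℂ) := by push_cast; ring
      have hv0 : (0:ℝ) ≤ s*(2+s*r0) := by nlinarith
      rw [hc]
      simp only [Complex.norm_real, Real.norm_eq_abs, abs_of_nonneg hr00, abs_of_nonneg hv0]
      exact hval.symm
  have hub : ∀ x ∈ preSchwarzianSet g, x ≤ M := part1 g hCL
  exact le_antisymm (csSup_le ⟨M, hmem⟩ hub) (le_csSup ⟨M, hub⟩ hmem)
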